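/- For any real constants a₂, a₃, c₁, c₂, the function h : ℝ² → ℝ defined by h(u,v) = ( a₂ + c₁ u + e^{2u}( a₃ + c₂ u ) ) / ( 1 + e^{2u} ) satisfies the generalized Helmholtz equation Δ[ ( (1+e^{2u})² / (4 e^{2u}) ) Δh + 2h ] = 0, where Δ denotes the Euclidean Laplacian in the coordinates (u,v). -/

import Mathlib

open Complex

noncomputable section

/-- Euclidean inner product on ℂ ≅ ℝ²: ⟨w₁,w₂⟩ = Re(w̄₁ w₂). -/
def inn (w₁ w₂ : ℂ) : ℝ := ((starRingEnd ℂ) w₁ * w₂).re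

/-- Partial derivative in u (z = u + iv). -/
def pd1 (f : ℂ → ℝ) (z : ℂ) : ℝ := fderiv ℝ f z 1
/-- Partial derivative in v (z = u + iv). -/
def pd2 (f : ℂ → ℝ) (z : ℂ) : ℝ := fderiv ℝ f z Complex.I
/-- Euclidean Laplacian Δf = f_{,11} + f_{,22}. -/
def lap (f : ℂ → ℝ) (z : ℂ) : ℝ := pd1 (pd1 f) z + pd2 (pd2 f) z

/-- Partial derivative in u of an ℝ³ ≅ ℂ × ℝ valued map. -/
def pdv1 (f : ℂ → ℂ × ℝ) (z : ℂ) : ℂ × ℝ := fderiv ℝ f z 1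
/-- Partial derivative in v of an ℝ³ ≅ ℂ × ℝ valued map. -/
def pdv2 (f : ℂ → ℂ × ℝ) (z : ℂ) : ℂ × ℝ := fderiv ℝ f z Complex.I
/-- Euclidean inner product on ℝ³ ≅ ℂ × ℝ. -/
def inn3 (p q : ℂ × ℝ) : ℝ := inn p.1 q.1 + p.2 * q.2

lemma pd1_comp_re (F F' : ℝ → ℝ) (hF : ∀ u, HasDerivAt F (F' u) u) (z : ℂ) :
    pd1 (fun w : ℂ => F w.re) z = F' z.re := by
  have h : HasFDerivAt (fun w : ℂ => F w.re)
      (((1 : ℝ →L[ℝ] ℝ).smulRight (F' z.re)).comp Complex.reCLM) z :=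
    (hF z.re).hasFDerivAt.comp z Complex.reCLM.hasFDerivAt
  unfold pd1
  rw [h.fderiv]
  simp

lemma pd2_comp_re (F F' : ℝ → ℝ) (hF : ∀ u, HasDerivAt F (F' u) u) (z : ℂ) :
    pd2 (fun w : ℂ => F w.re) z = 0 := by
  have h : HasFDerivAt (fun w : ℂ => F w.re)
      (((1 : ℝ →L[ℝ] ℝ).smulRight (F' z.re)).comp Complex.reCLM) z :=
    (hF z.re).hasFDerivAt.comp z Complex.reCLM.hasFDerivAt
  unfold pd2
  rw [h.fderiv]
  simp

lemma lap_comp_re (F F' F'' : ℝ → ℝ) (hF : ∀ u, HasDerivAt F (F' u) u)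
    (hF' : ∀ u, HasDerivAt F' (F'' u) u) (z : ℂ) :
    lap (fun w : ℂ => F w.re) z = F'' z.re := by
  unfold lap
  have h1 : pd1 (fun w : ℂ => F w.re) = fun w : ℂ => F' w.re :=
    funext (pd1_comp_re F F' hF)
  have h2 : pd2 (fun w : ℂ => F w.re) = fun _ : ℂ => (0 : ℝ) :=
    funext (pd2_comp_re F F' hF)
  rw [h1, h2, pd1_comp_re F' F'' hF' z]
  have : pd2 (fun _ : ℂ => (0 : ℝ)) z = 0 := by
    unfold pd2; simp
  rw [this, add_zero]

/-- h(u,v) = (a₂ + c₁u + e^{2u}(a₃ + c₂u))/(1+e^{2u}) solves the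
generalized Helmholtz equation Δ[((1+e^{2u})²/(4e^{2u})) Δh + 2h] = 0. -/
theorem stmt_9 (a₂ a₃ c₁ c₂ : ℝ) :
    let h : ℂ → ℝ := fun z =>
      (a₂ + c₁ * z.re + Real.exp (2 * z.re) * (a₃ + c₂ * z.re)) / (1 + Real.exp (2 * z.re))
    ∀ z : ℂ,
      lap (fun w =>
        ((1 + Real.exp (2 * w.re)) ^ 2 / (4 * Real.exp (2 * w.re))) * lap h w
          + 2 * h w) z = 0 := by
  intro h z
  set A : ℝ := c₁ + c₂ + 2 * (a₃ - a₂) with hA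
  set B : ℝ := 2 * (c₂ - c₁) with hB
  set F : ℝ → ℝ := fun u =>
    (a₂ + c₁ * u + Real.exp (2 * u) * (a₃ + c₂ * u)) / (1 + Real.exp (2 * u)) with hFdef
  set F' : ℝ → ℝ := fun u =>
    (c₁ + Real.exp (2 * u) * (A + B * u) + c₂ * (Real.exp (2 * u)) ^ 2)
      / (1 + Real.exp (2 * u)) ^ 2 with hF'def
  set F'' : ℝ → ℝ := fun u =>
    (Real.exp (2 * u) * (2 * (A + B * u) + B - 4 * c₁)
      + (Real.exp (2 * u)) ^ 2 * (B + 4 * c₂ - 2 * (A + B * u)))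
      / (1 + Real.exp (2 * u)) ^ 3 with hF''def
  have hEpos : ∀ u : ℝ, 0 < Real.exp (2 * u) := fun u => Real.exp_pos _
  have hDne : ∀ u : ℝ, (1 + Real.exp (2 * u)) ≠ 0 := fun u => by positivity
  have hE : ∀ u : ℝ, HasDerivAt (fun u => Real.exp (2 * u)) (Real.exp (2 * u) * 2) u := by
    intro u
    simpa using ((hasDerivAt_id u).const_mul 2).exp
  have hF : ∀ u, HasDerivAt F (F' u) u := by
    intro u
    have hnum : HasDerivAt (fun u => a₂ + c₁ * u + Real.exp (2 * u) * (a₃ + c₂ * u))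
        (c₁ + (Real.exp (2 * u) * 2 * (a₃ + c₂ * u) + Real.exp (2 * u) * c₂)) u := by
      have h1 : HasDerivAt (fun u : ℝ => a₂ + c₁ * u) c₁ u := by
        simpa [Pi.add_def] using (hasDerivAt_const u a₂).add ((hasDerivAt_id u).const_mul c₁)
      have h2 : HasDerivAt (fun u : ℝ => a₃ + c₂ * u) c₂ u := by
        simpa [Pi.add_def] using (hasDerivAt_const u a₃).add ((hasDerivAt_id u).const_mul c₂)
      exact h1.add ((hE u).mul h2)
    have hden : HasDerivAt (fun u => 1 + Real.exp (2 * u)) (Real.exp (2 * u) * 2) u := by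
      simpa [Pi.add_def] using (hasDerivAt_const u (1:ℝ)).add (hE u)
    have hdiv := hnum.div hden (hDne u)
    refine hdiv.congr_deriv ?_
    rw [hF'def]
    field_simp
    ring
  have hF' : ∀ u, HasDerivAt F' (F'' u) u := by
    intro u
    have hnum : HasDerivAt
        (fun u => c₁ + Real.exp (2 * u) * (A + B * u) + c₂ * (Real.exp (2 * u)) ^ 2)
        ((Real.exp (2 * u) * 2 * (A + B * u) + Real.exp (2 * u) * B)
          + c₂ * (2 * Real.exp (2 * u) ^ 1 * (Real.exp (2 * u) * 2))) u := by
      have h1 : HasDerivAt (fun u : ℝ => A + B * u) B u := by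
        simpa [Pi.add_def] using (hasDerivAt_const u A).add ((hasDerivAt_id u).const_mul B)
      have h2 := (hE u).mul h1
      have h3 := ((hE u).pow 2).const_mul c₂
      have h4 := ((hasDerivAt_const u c₁).add h2).add h3
      refine h4.congr_deriv ?_
      ring
    have hden : HasDerivAt (fun u => (1 + Real.exp (2 * u)) ^ 2)
        (2 * (1 + Real.exp (2 * u)) ^ 1 * (Real.exp (2 * u) * 2)) u := by
      have : HasDerivAt (fun u => 1 + Real.exp (2 * u)) (Real.exp (2 * u) * 2) u := by
        simpa [Pi.add_def] using (hasDerivAt_const u (1:ℝ)).add (hE u)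
      exact this.pow 2
    have hdne2 : ((1 + Real.exp (2 * u)) ^ 2 : ℝ) ≠ 0 := pow_ne_zero _ (hDne u)
    have hdiv := hnum.div hden hdne2
    refine hdiv.congr_deriv ?_
    rw [hF''def]
    field_simp
    ring
  have hlap : ∀ w : ℂ, lap h w = F'' w.re := fun w =>
    lap_comp_re F F' F'' hF hF' w
  set G : ℝ → ℝ := fun u =>
    ((1 + Real.exp (2 * u)) ^ 2 / (4 * Real.exp (2 * u))) * F'' u + 2 * F u with hGdef
  have hfun : (fun w : ℂ =>
      ((1 + Real.exp (2 * w.re)) ^ 2 / (4 * Real.exp (2 * w.re))) * lap h w + 2 * h w)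
      = fun w : ℂ => G w.re := by
    funext w
    rw [hlap w]
  rw [hfun]
  have hGeq : G = fun u => (a₂ + a₃ + c₂ - c₁) + (c₁ + c₂) * u := by
    funext u
    rw [hGdef]
    simp only [hF''def, hFdef]
    have h1 := hDne u
    have h2 := (hEpos u).ne'
    field_simp
    rw [hA, hB]
    ring
  rw [hGeq]
  have hG1 : ∀ u : ℝ, HasDerivAt (fun u => (a₂ + a₃ + c₂ - c₁) + (c₁ + c₂) * u)
      ((fun _ : ℝ => c₁ + c₂) u) u := by
    intro u
    simpa [Pi.add_def] using (hasDerivAt_const u (a₂ + a₃ + c₂ - c₁)).add ((hasDerivAt_id u).const_mul (c₁ + c₂))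
  have hG2 : ∀ u : ℝ, HasDerivAt (fun _ : ℝ => c₁ + c₂) ((fun _ : ℝ => (0:ℝ)) u) u :=
    fun u => hasDerivAt_const u (c₁ + c₂)
  exact lap_comp_re _ _ _ hG1 hG2 z
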